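/- Let n ≥ 3 and 0 < 2s < 1. For x, y ∈ S^{n-1} with x ≠ y define L_{2s}(x·y) = (1/|Γ(-2s)|) ∫_0^∞ e^{-t(n-2)/2} P_{e^{-t}}(x·y) t^{-1-2s} dt. Then there exist constants 0 < c ≤ C, depending only on n and s, such that c / d(x,y)^{(n-1)+2s} ≤ L_{2s}(x·y) ≤ C / d(x,y)^{(n-1)+2s} for all x, y ∈ S^{n-1} with x ≠ y. -/

import Mathlib

open MeasureTheory

/-- The surface area `ω_{n-1} = 2π^{n/2}/Γ(n/2)` of the unit sphere `S^{n-1} ⊂ ℝ^n`. -/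
noncomputable def omegaSphere (n : ℕ) : ℝ :=
  2 * Real.pi ^ ((n : ℝ) / 2) / Real.Gamma ((n : ℝ) / 2)

/-- The Poisson kernel for the unit ball in `ℝ^n`:
`P_r(τ) = (1 - r²)/(ω_{n-1}(1 - 2rτ + r²)^{n/2})`. -/
noncomputable def spherePoissonKernel (n : ℕ) (r τ : ℝ) : ℝ :=
  (1 - r ^ 2) / (omegaSphere n * (1 - 2 * r * τ + r ^ 2) ^ ((n : ℝ) / 2))

section Aux

open Real Set

set_option maxHeartbeats 1000000

private lemma omegaSphere_pos (n : ℕ) (hn : 1 ≤ n) : 0 < omegaSphere n := by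
  unfold omegaSphere
  have hn1 : (1:ℝ) ≤ (n:ℝ) := by exact_mod_cast hn
  have h1 : 0 < Real.Gamma ((n:ℝ)/2) := Real.Gamma_pos_of_pos (by linarith)
  positivity

private lemma g_meas (n : ℕ) (τ s : ℝ) :
    Measurable (fun t : ℝ => Real.exp (-(t * ((n:ℝ) - 2) / 2)) *
      spherePoissonKernel n (Real.exp (-t)) τ * t ^ (-1 - 2*s)) := by
  unfold spherePoissonKernel omegaSphere
  fun_prop

private lemma g_nonneg (n : ℕ) (hn : 1 ≤ n) (τ s : ℝ) (hτ1 : τ ≤ 1) (t : ℝ) (ht0 : 0 < t) :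
    0 ≤ Real.exp (-(t * ((n:ℝ) - 2) / 2)) *
      spherePoissonKernel n (Real.exp (-t)) τ * t ^ (-1 - 2*s) := by
  have hr0 : 0 < Real.exp (-t) := Real.exp_pos _
  have hr1 : Real.exp (-t) < 1 := Real.exp_lt_one_iff.2 (by linarith)
  have hω := omegaSphere_pos n hn
  have hq : (0:ℝ) ≤ 1 - 2 * Real.exp (-t) * τ + Real.exp (-t) ^ 2 := by
    nlinarith [sq_nonneg (1 - Real.exp (-t))]
  unfold spherePoissonKernel
  have h1 : (0:ℝ) ≤ 1 - Real.exp (-t) ^ 2 := by nlinarith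
  have h2 : (0:ℝ) ≤ (1 - 2 * Real.exp (-t) * τ + Real.exp (-t) ^ 2) ^ ((n:ℝ)/2) :=
    Real.rpow_nonneg hq _
  have h3 : (0:ℝ) ≤ t ^ (-1 - 2*s) := Real.rpow_nonneg ht0.le _
  exact mul_nonneg (mul_nonneg (Real.exp_pos _).le (div_nonneg h1 (mul_nonneg hω.le h2))) h3

private lemma piece1 (n : ℕ) (hn : 3 ≤ n) (s : ℝ) (hs0 : 0 < 2*s) (hs1 : 2*s < 1)
    (τ d : ℝ) (hτ1 : τ < 1) (hd0 : 0 < d) (hdπ : d ≤ π)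
    (h2τ : 2/π^2*d^2 ≤ 1 - τ) (t : ℝ) (ht0 : 0 < t) (htd : t ≤ d) :
    Real.exp (-(t * ((n:ℝ) - 2) / 2)) * spherePoissonKernel n (Real.exp (-t)) τ * t ^ (-1 - 2*s)
      ≤ (2 / (omegaSphere n * (4*Real.exp (-π)/π^2) ^ ((n:ℝ)/2))) * d ^ (-(n:ℝ)) * t ^ (-(2*s)) := by
  have hω : 0 < omegaSphere n := omegaSphere_pos n (by omega)
  have hn3 : (3:ℝ) ≤ (n:ℝ) := by exact_mod_cast hn
  set r := Real.exp (-t) with hr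
  have hr0 : 0 < r := Real.exp_pos _
  have hr1 : r < 1 := Real.exp_lt_one_iff.2 (by linarith)
  have h1r : 1 - r ≤ t := by nlinarith [Real.add_one_le_exp (-t)]
  have hrπ : Real.exp (-π) ≤ r := Real.exp_le_exp.2 (by linarith)
  set A1 : ℝ := 4*Real.exp (-π)/π^2 with hA1
  have hA1pos : 0 < A1 := by positivity
  set q : ℝ := 1 - 2 * r * τ + r ^ 2 with hqdef
  have hqsplit : q = (1-r)^2 + 2*r*(1-τ) := by rw [hqdef]; ring
  have hq0 : 0 < q := by nlinarith [sq_nonneg (1-r)]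
  have hq_low : A1 * d^2 ≤ q := by
    have h2r : 2 * Real.exp (-π) * (2/π^2*d^2) ≤ 2 * r * (1 - τ) :=
      mul_le_mul (by linarith) h2τ (by positivity) (by positivity)
    calc A1 * d^2 = 2 * Real.exp (-π) * (2/π^2*d^2) := by rw [hA1]; ring
      _ ≤ 2*r*(1-τ) := h2r
      _ ≤ q := by nlinarith [sq_nonneg (1-r)]
  have hqν : A1^((n:ℝ)/2) * d^(n:ℝ) ≤ q ^ ((n:ℝ)/2) := by
    have e1 : (A1 * d^2) ^ ((n:ℝ)/2) = A1^((n:ℝ)/2) * d^(n:ℝ) := by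
      rw [Real.mul_rpow hA1pos.le (by positivity), ← Real.rpow_natCast d 2,
        ← Real.rpow_mul hd0.le]
      rw [show ((2:ℕ):ℝ) * ((n:ℝ)/2) = (n:ℝ) by push_cast; ring]
    rw [← e1]
    exact Real.rpow_le_rpow (by positivity) hq_low (by positivity)
  have hnum : 1 - r^2 ≤ 2*t := by nlinarith
  unfold spherePoissonKernel
  rw [← hqdef]
  calc Real.exp (-(t * ((n:ℝ) - 2) / 2)) * ((1 - r ^ 2) / (omegaSphere n * q ^ ((n:ℝ)/2))) * t ^ (-1 - 2*s)
      ≤ 1 * ((2*t) / (omegaSphere n * (A1^((n:ℝ)/2) * d^(n:ℝ)))) * t ^ (-1 - 2*s) := by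
        have hnn : (0:ℝ) ≤ t ^ (-1 - 2*s) := Real.rpow_nonneg ht0.le _
        apply mul_le_mul_of_nonneg_right _ hnn
        apply mul_le_mul
        · exact Real.exp_le_one_iff.2 (by nlinarith)
        · apply div_le_div₀ (by positivity) hnum (by positivity)
          exact mul_le_mul_of_nonneg_left hqν hω.le
        · exact div_nonneg (by nlinarith) (mul_nonneg hω.le (Real.rpow_nonneg hq0.le _))
        · norm_num
    _ = (2 / (omegaSphere n * A1 ^ ((n:ℝ)/2))) * d ^ (-(n:ℝ)) * (t ^ (1:ℝ) * t ^ (-1 - 2*s)) := by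
        rw [Real.rpow_one, Real.rpow_neg hd0.le]
        have hA1ν : (0:ℝ) < A1 ^ ((n:ℝ)/2) := Real.rpow_pos_of_pos hA1pos _
        have hdν : (0:ℝ) < d ^ (n:ℝ) := Real.rpow_pos_of_pos hd0 _
        field_simp
    _ = (2 / (omegaSphere n * A1 ^ ((n:ℝ)/2))) * d ^ (-(n:ℝ)) * t ^ (-(2*s)) := by
        rw [← Real.rpow_add ht0, show (1:ℝ) + (-1 - 2*s) = -(2*s) by ring]

private lemma piece2 (n : ℕ) (hn : 3 ≤ n) (s : ℝ) (hs0 : 0 < 2*s) (hs1 : 2*s < 1)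
    (τ : ℝ) (hτ1 : τ < 1) (t : ℝ) (ht0 : 0 < t) :
    Real.exp (-(t * ((n:ℝ) - 2) / 2)) * spherePoissonKernel n (Real.exp (-t)) τ * t ^ (-1 - 2*s)
      ≤ (2 * 9 ^ ((n:ℝ)/2) / omegaSphere n) * t ^ (-(n:ℝ) - 2*s)
        + (4 ^ ((n:ℝ)/2) / omegaSphere n) * Real.exp (-(1/2) * t) := by
  have hω : 0 < omegaSphere n := omegaSphere_pos n (by omega)
  have hn3 : (3:ℝ) ≤ (n:ℝ) := by exact_mod_cast hn
  set r := Real.exp (-t) with hr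
  have hr0 : 0 < r := Real.exp_pos _
  have hr1 : r < 1 := Real.exp_lt_one_iff.2 (by linarith)
  have h1r : 1 - r ≤ t := by nlinarith [Real.add_one_le_exp (-t)]
  set q : ℝ := 1 - 2 * r * τ + r ^ 2 with hqdef
  have hqsplit : q = (1-r)^2 + 2*r*(1-τ) := by rw [hqdef]; ring
  have hq0 : 0 < q := by nlinarith [sq_nonneg (1-r)]
  have hnum : 1 - r^2 ≤ 2*t := by nlinarith
  unfold spherePoissonKernel
  rw [← hqdef]
  rcases le_or_gt t 1 with htl | htg
  · have h13 : t/3 ≤ 1 - r := by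
      have hre : r * Real.exp t = 1 := by rw [hr, ← Real.exp_add]; simp
      have h1 : t * r ≤ 1 - r := by
        nlinarith [mul_le_mul_of_nonneg_left (Real.add_one_le_exp t) hr0.le]
      have h2 : Real.exp (-1) ≤ r := Real.exp_le_exp.2 (by linarith)
      have h3 : (3:ℝ)⁻¹ ≤ Real.exp (-1) := by
        rw [Real.exp_neg]
        have := Real.exp_one_lt_d9
        exact inv_anti₀ (Real.exp_pos 1) (by linarith)
      nlinarith
    have hq_low : t^2/9 ≤ q := by nlinarith
    have hqν : t^(n:ℝ) / 9^((n:ℝ)/2) ≤ q ^ ((n:ℝ)/2) := by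
      have e1 : (t^2/9) ^ ((n:ℝ)/2) = t^(n:ℝ) / 9^((n:ℝ)/2) := by
        rw [Real.div_rpow (by positivity) (by norm_num), ← Real.rpow_natCast t 2,
          ← Real.rpow_mul ht0.le]
        rw [show ((2:ℕ):ℝ) * ((n:ℝ)/2) = (n:ℝ) by push_cast; ring]
      rw [← e1]
      exact Real.rpow_le_rpow (by positivity) hq_low (by positivity)
    have main : Real.exp (-(t * ((n:ℝ) - 2) / 2)) * ((1 - r ^ 2) / (omegaSphere n * q ^ ((n:ℝ)/2))) * t ^ (-1 - 2*s)
        ≤ (2 * 9 ^ ((n:ℝ)/2) / omegaSphere n) * t ^ (-(n:ℝ) - 2*s) := by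
      calc Real.exp (-(t * ((n:ℝ) - 2) / 2)) * ((1 - r ^ 2) / (omegaSphere n * q ^ ((n:ℝ)/2))) * t ^ (-1 - 2*s)
          ≤ 1 * ((2*t) / (omegaSphere n * (t^(n:ℝ) / 9^((n:ℝ)/2)))) * t ^ (-1 - 2*s) := by
            have hnn : (0:ℝ) ≤ t ^ (-1 - 2*s) := Real.rpow_nonneg ht0.le _
            apply mul_le_mul_of_nonneg_right _ hnn
            apply mul_le_mul
            · exact Real.exp_le_one_iff.2 (by nlinarith)
            · apply div_le_div₀ (by positivity) hnum (by positivity)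
              exact mul_le_mul_of_nonneg_left hqν hω.le
            · exact div_nonneg (by nlinarith) (mul_nonneg hω.le (Real.rpow_nonneg hq0.le _))
            · norm_num
        _ = (2 * 9 ^ ((n:ℝ)/2) / omegaSphere n) * (t ^ (1:ℝ) * (t ^ (n:ℝ))⁻¹ * t ^ (-1 - 2*s)) := by
            rw [Real.rpow_one]
            have h9 : (0:ℝ) < (9:ℝ) ^ ((n:ℝ)/2) := Real.rpow_pos_of_pos (by norm_num) _
            have htν : (0:ℝ) < t ^ (n:ℝ) := Real.rpow_pos_of_pos ht0 _
            field_simp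
        _ = (2 * 9 ^ ((n:ℝ)/2) / omegaSphere n) * t ^ (-(n:ℝ) - 2*s) := by
            rw [← Real.rpow_neg ht0.le, ← Real.rpow_add ht0, ← Real.rpow_add ht0,
              show (1:ℝ) + -(n:ℝ) + (-1 - 2*s) = -(n:ℝ) - 2*s by ring]
    have hexp : (0:ℝ) ≤ (4 ^ ((n:ℝ)/2) / omegaSphere n) * Real.exp (-(1/2) * t) := by positivity
    linarith
  · have hrhalf : r ≤ 1/2 := by
      have h2 : r ≤ Real.exp (-1) := Real.exp_le_exp.2 (by linarith)
      have h3 : Real.exp (-1) ≤ 1/2 := by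
        rw [Real.exp_neg]
        rw [inv_le_comm₀ (Real.exp_pos 1) (by norm_num)]
        nlinarith [Real.add_one_le_exp 1]
      linarith
    have hq_low : (1:ℝ)/4 ≤ q := by nlinarith
    have hqν : (1/4:ℝ)^((n:ℝ)/2) ≤ q ^ ((n:ℝ)/2) :=
      Real.rpow_le_rpow (by norm_num) hq_low (by positivity)
    have main : Real.exp (-(t * ((n:ℝ) - 2) / 2)) * ((1 - r ^ 2) / (omegaSphere n * q ^ ((n:ℝ)/2))) * t ^ (-1 - 2*s)
        ≤ (4 ^ ((n:ℝ)/2) / omegaSphere n) * Real.exp (-(1/2) * t) := by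
      calc Real.exp (-(t * ((n:ℝ) - 2) / 2)) * ((1 - r ^ 2) / (omegaSphere n * q ^ ((n:ℝ)/2))) * t ^ (-1 - 2*s)
          ≤ Real.exp (-(1/2) * t) * (1 / (omegaSphere n * (1/4:ℝ)^((n:ℝ)/2))) * 1 := by
            apply mul_le_mul
            · apply mul_le_mul
              · exact Real.exp_le_exp.2 (by nlinarith)
              · apply div_le_div₀ (by norm_num) (by nlinarith) (by positivity)
                exact mul_le_mul_of_nonneg_left hqν hω.le
              · exact div_nonneg (by nlinarith) (mul_nonneg hω.le (Real.rpow_nonneg hq0.le _))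
              · positivity
            · exact Real.rpow_le_one_of_one_le_of_nonpos htg.le (by linarith)
            · exact Real.rpow_nonneg ht0.le _
            · positivity
        _ = (4 ^ ((n:ℝ)/2) / omegaSphere n) * Real.exp (-(1/2) * t) := by
            rw [show (1/4:ℝ) = ((4:ℝ))⁻¹ by norm_num, Real.inv_rpow (by norm_num)]
            have h4 : (0:ℝ) < (4:ℝ) ^ ((n:ℝ)/2) := Real.rpow_pos_of_pos (by norm_num) _
            field_simp
    have hfirst : (0:ℝ) ≤ (2 * 9 ^ ((n:ℝ)/2) / omegaSphere n) * t ^ (-(n:ℝ) - 2*s) := by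
      have := Real.rpow_nonneg ht0.le (-(n:ℝ) - 2*s)
      positivity
    linarith

private lemma piece3 (n : ℕ) (hn : 3 ≤ n) (s : ℝ) (hs0 : 0 < 2*s) (hs1 : 2*s < 1)
    (τ d : ℝ) (hτ1 : τ < 1) (hd0 : 0 < d) (hdπ : d ≤ π)
    (h1τ : 1 - τ ≤ d^2/2) (t : ℝ) (htd : d < t) (ht2 : t ≤ 2*d) :
    Real.exp (-(π * ((n:ℝ)-2))) * ((2 * Real.exp (-(4*π)) * d) /
        (omegaSphere n * (5^((n:ℝ)/2) * d^(n:ℝ)))) * (2*d) ^ (-1 - 2*s)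
      ≤ Real.exp (-(t * ((n:ℝ) - 2) / 2)) * spherePoissonKernel n (Real.exp (-t)) τ * t ^ (-1 - 2*s) := by
  have hω : 0 < omegaSphere n := omegaSphere_pos n (by omega)
  have hn3 : (3:ℝ) ≤ (n:ℝ) := by exact_mod_cast hn
  have ht0 : 0 < t := lt_trans hd0 htd
  have ht2π : t ≤ 2*π := by linarith
  set r := Real.exp (-t) with hr
  have hr0 : 0 < r := Real.exp_pos _
  have hr1 : r < 1 := Real.exp_lt_one_iff.2 (by linarith)
  have h1r : 1 - r ≤ t := by nlinarith [Real.add_one_le_exp (-t)]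
  set q : ℝ := 1 - 2 * r * τ + r ^ 2 with hqdef
  have hqsplit : q = (1-r)^2 + 2*r*(1-τ) := by rw [hqdef]; ring
  have hq0 : 0 < q := by nlinarith [sq_nonneg (1-r)]
  have hr2 : r^2 = Real.exp (-(2*t)) := by rw [hr, sq, ← Real.exp_add]; ring_nf
  have hnum1 : 2*t*r^2 ≤ 1 - r^2 := by
    nlinarith [mul_le_mul_of_nonneg_left (Real.add_one_le_exp (2*t)) (by positivity : (0:ℝ) ≤ r^2),
      (by rw [hr2, ← Real.exp_add]; simp : r^2 * Real.exp (2*t) = 1)]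
  have hr2low : Real.exp (-(4*π)) ≤ r^2 := by rw [hr2]; exact Real.exp_le_exp.2 (by linarith)
  have hnum : 2 * Real.exp (-(4*π)) * d ≤ 1 - r^2 := by
    have : 2 * Real.exp (-(4*π)) * d ≤ 2*t*r^2 := by nlinarith [Real.exp_pos (-(4*π))]
    linarith
  have hq_up : q ≤ 5 * d^2 := by nlinarith
  have hqν : q ^ ((n:ℝ)/2) ≤ 5^((n:ℝ)/2) * d^(n:ℝ) := by
    have e1 : ((5:ℝ) * d^2) ^ ((n:ℝ)/2) = 5^((n:ℝ)/2) * d^(n:ℝ) := by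
      rw [Real.mul_rpow (by norm_num) (by positivity), ← Real.rpow_natCast d 2,
        ← Real.rpow_mul hd0.le]
      rw [show ((2:ℕ):ℝ) * ((n:ℝ)/2) = (n:ℝ) by push_cast; ring]
    rw [← e1]
    exact Real.rpow_le_rpow hq0.le hq_up (by positivity)
  have hZ : (2*d) ^ (-1 - 2*s) ≤ t ^ (-1 - 2*s) :=
    Real.rpow_le_rpow_of_nonpos ht0 ht2 (by linarith)
  unfold spherePoissonKernel
  rw [← hqdef]
  have hqνpos : 0 < q ^ ((n:ℝ)/2) := Real.rpow_pos_of_pos hq0 _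
  apply mul_le_mul _ hZ (Real.rpow_nonneg (by positivity) _)
  · exact mul_nonneg (Real.exp_pos _).le (div_nonneg (by nlinarith) (by positivity))
  apply mul_le_mul
  · exact Real.exp_le_exp.2 (by nlinarith)
  · apply div_le_div₀ (by nlinarith) hnum (by positivity)
    exact mul_le_mul_of_nonneg_left hqν hω.le
  · positivity
  · positivity

/-- Core two-sided bound on the integral, for `τ ∈ [-1, 1)`. -/
private lemma core (n : ℕ) (hn : 3 ≤ n) (s : ℝ) (hs0 : 0 < 2 * s) (hs1 : 2 * s < 1) :
    ∃ c C : ℝ, 0 < c ∧ 0 < C ∧ ∀ τ : ℝ, -1 ≤ τ → τ < 1 →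
      (c * Real.arccos τ ^ (-((n : ℝ) - 1 + 2 * s)) ≤
        ∫ t in Set.Ioi (0:ℝ), Real.exp (-(t * ((n : ℝ) - 2) / 2)) *
            spherePoissonKernel n (Real.exp (-t)) τ * t ^ (-1 - 2*s)) ∧
      (∫ t in Set.Ioi (0:ℝ), Real.exp (-(t * ((n : ℝ) - 2) / 2)) *
            spherePoissonKernel n (Real.exp (-t)) τ * t ^ (-1 - 2*s))
          ≤ C * Real.arccos τ ^ (-((n : ℝ) - 1 + 2 * s)) := by
  have hω : 0 < omegaSphere n := omegaSphere_pos n (by omega)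
  have hn3 : (3:ℝ) ≤ (n:ℝ) := by exact_mod_cast hn
  set ν : ℝ := (n:ℝ)/2 with hν
  set al : ℝ := (n:ℝ) - 1 + 2*s with hal
  have hal0 : 0 < al := by rw [hal]; linarith
  -- constants
  set K1 : ℝ := 2 / (omegaSphere n * (4*Real.exp (-π)/π^2) ^ ν) with hK1
  set K2 : ℝ := 2 * 9 ^ ν / omegaSphere n with hK2
  set K3 : ℝ := 4 ^ ν / omegaSphere n with hK3
  set E0 : ℝ := ∫ t in Set.Ioi (0:ℝ), Real.exp (-(1/2) * t) with hE0
  have hE0nn : 0 ≤ E0 := by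
    rw [hE0]
    exact setIntegral_nonneg measurableSet_Ioi (fun t _ => (Real.exp_pos _).le)
  have hK1pos : 0 < K1 := by
    rw [hK1]
    exact div_pos two_pos (mul_pos hω (Real.rpow_pos_of_pos (by positivity) _))
  have hK2pos : 0 < K2 := by
    rw [hK2]
    exact div_pos (by positivity) hω
  have hK3pos : 0 < K3 := by
    rw [hK3]
    exact div_pos (by positivity) hω
  set c₀ : ℝ := Real.exp (-(π * ((n:ℝ)-2))) * (2 * Real.exp (-(4*π)) / (omegaSphere n * 5 ^ ν))
      * 2 ^ (-1 - 2*s) with hc₀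
  set C₀ : ℝ := K1 / (1 - 2*s) + K2 / al + K3 * E0 * π ^ al + 1 with hC₀
  have hc₀pos : 0 < c₀ := by
    rw [hc₀]
    have h5 : (0:ℝ) < (5:ℝ) ^ ν := Real.rpow_pos_of_pos (by norm_num) _
    have h2p : (0:ℝ) < (2:ℝ) ^ (-1 - 2*s) := Real.rpow_pos_of_pos (by norm_num) _
    positivity
  have hC₀pos : 0 < C₀ := by
    have h1 : 0 < K1 / (1 - 2*s) := div_pos hK1pos (by linarith)
    have h2 : 0 < K2 / al := div_pos hK2pos hal0
    have h3 : 0 ≤ K3 * E0 * π ^ al :=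
      mul_nonneg (mul_nonneg hK3pos.le hE0nn) (Real.rpow_pos_of_pos Real.pi_pos _).le
    rw [hC₀]; linarith
  refine ⟨c₀, C₀, hc₀pos, hC₀pos, fun τ hτm hτ1 => ?_⟩
  set d : ℝ := Real.arccos τ with hd
  have hd0 : 0 < d := by rw [hd]; exact Real.arccos_pos.2 hτ1
  have hdπ : d ≤ π := Real.arccos_le_pi τ
  have hcos : Real.cos d = τ := Real.cos_arccos hτm hτ1.le
  have h1τ : 1 - τ ≤ d^2/2 := by
    have := Real.one_sub_sq_div_two_le_cos (x := d)
    rw [hcos] at this; linarith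
  have h2τ : 2/π^2*d^2 ≤ 1 - τ := by
    have habs : |d| ≤ π := by rw [abs_of_nonneg hd0.le]; exact hdπ
    have := Real.cos_le_one_sub_mul_cos_sq habs
    rw [hcos] at this; linarith
  set g : ℝ → ℝ := fun t => Real.exp (-(t * ((n:ℝ) - 2) / 2)) *
      spherePoissonKernel n (Real.exp (-t)) τ * t ^ (-1 - 2*s) with hg
  have hgm : Measurable g := g_meas n τ s
  have hgnn : ∀ t ∈ Set.Ioi (0:ℝ), 0 ≤ g t := fun t ht => g_nonneg n (by omega) τ s hτ1.le t ht
  -- dominating functions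
  set h1 : ℝ → ℝ := fun t => K1 * d ^ (-(n:ℝ)) * t ^ (-(2*s)) with hh1
  set h2 : ℝ → ℝ := fun t => K2 * t ^ (-(n:ℝ) - 2*s) + K3 * Real.exp (-(1/2) * t) with hh2
  have hh1int : IntegrableOn h1 (Set.Ioc 0 d) := by
    have hii : IntervalIntegrable (fun t : ℝ => t ^ (-(2*s))) volume 0 d :=
      intervalIntegral.intervalIntegrable_rpow' (by linarith)
    have := (intervalIntegrable_iff_integrableOn_Ioc_of_le hd0.le).1 hii
    exact this.const_mul _
  have hh2int : IntegrableOn h2 (Set.Ioi d) := by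
    have ha : IntegrableOn (fun t : ℝ => t ^ (-(n:ℝ) - 2*s)) (Set.Ioi d) :=
      integrableOn_Ioi_rpow_of_lt (by linarith) hd0
    have hb : IntegrableOn (fun t : ℝ => Real.exp (-(1/2) * t)) (Set.Ioi d) :=
      exp_neg_integrableOn_Ioi d (by norm_num)
    exact (ha.const_mul _).add (hb.const_mul _)
  have hgle1 : ∀ t ∈ Set.Ioc (0:ℝ) d, g t ≤ h1 t := fun t ht =>
    piece1 n hn s hs0 hs1 τ d hτ1 hd0 hdπ h2τ t ht.1 ht.2
  have hgle2 : ∀ t ∈ Set.Ioi d, g t ≤ h2 t := fun t ht =>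
    piece2 n hn s hs0 hs1 τ hτ1 t (lt_trans hd0 ht)
  have hgint1 : IntegrableOn g (Set.Ioc 0 d) := by
    apply Integrable.mono' hh1int (hgm.aestronglyMeasurable.restrict)
    rw [ae_restrict_iff' measurableSet_Ioc]
    exact Filter.Eventually.of_forall fun t ht => by
      rw [Real.norm_eq_abs, abs_of_nonneg (hgnn t ht.1)]; exact hgle1 t ht
  have hgint2 : IntegrableOn g (Set.Ioi d) := by
    apply Integrable.mono' hh2int (hgm.aestronglyMeasurable.restrict)
    rw [ae_restrict_iff' measurableSet_Ioi]
    exact Filter.Eventually.of_forall fun t ht => by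
      rw [Real.norm_eq_abs, abs_of_nonneg (hgnn t (lt_trans hd0 ht))]; exact hgle2 t ht
  have hgint : IntegrableOn g (Set.Ioi 0) := by
    have := hgint1.union hgint2
    rwa [Set.Ioc_union_Ioi_eq_Ioi hd0.le] at this
  have hsplit : ∫ t in Set.Ioi (0:ℝ), g t
      = (∫ t in Set.Ioc (0:ℝ) d, g t) + ∫ t in Set.Ioi d, g t := by
    rw [← setIntegral_union (Set.Ioc_disjoint_Ioi le_rfl) measurableSet_Ioi hgint1 hgint2,
      Set.Ioc_union_Ioi_eq_Ioi hd0.le]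
  -- value of the first dominating integral
  have hval1 : ∫ t in Set.Ioc (0:ℝ) d, h1 t = K1 * d^(-(n:ℝ)) * (d ^ (1-2*s)/(1-2*s)) := by
    rw [hh1]
    rw [MeasureTheory.integral_const_mul]
    congr 1
    rw [← intervalIntegral.integral_of_le hd0.le,
      integral_rpow (Or.inl (by linarith))]
    rw [Real.zero_rpow (by intro h; linarith : -(2*s) + 1 ≠ 0)]
    rw [show -(2*s) + 1 = 1 - 2*s by ring]
    ring
  have hub1 : ∫ t in Set.Ioc (0:ℝ) d, g t ≤ K1/(1-2*s) * d ^ (-al) := by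
    have := setIntegral_mono_on hgint1 hh1int measurableSet_Ioc hgle1
    rw [hval1] at this
    have heq : K1 * d^(-(n:ℝ)) * (d ^ (1-2*s)/(1-2*s)) = K1/(1-2*s) * d ^ (-al) := by
      rw [show K1 * d^(-(n:ℝ)) * (d ^ (1-2*s)/(1-2*s))
          = K1/(1-2*s) * (d^(-(n:ℝ)) * d ^ (1-2*s)) by ring,
        ← Real.rpow_add hd0, hal, show -(n:ℝ) + (1-2*s) = -((n:ℝ) - 1 + 2*s) by ring]
    rwa [heq] at this
  -- value of the second dominating integral
  have hval2 : ∫ t in Set.Ioi d, h2 t = K2 * (d ^ (-al) / al) + K3 * ∫ t in Set.Ioi d, Real.exp (-(1/2) * t) := by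
    rw [hh2]
    rw [integral_add ((integrableOn_Ioi_rpow_of_lt (by linarith) hd0).const_mul _)
      ((exp_neg_integrableOn_Ioi d (by norm_num)).const_mul _)]
    rw [MeasureTheory.integral_const_mul, MeasureTheory.integral_const_mul]
    congr 2
    rw [integral_Ioi_rpow_of_lt (by linarith) hd0]
    rw [show -(n:ℝ) - 2*s + 1 = -al by rw [hal]; ring]
    rw [neg_div, div_neg, neg_neg]
  have hEd : (∫ t in Set.Ioi d, Real.exp (-(1/2) * t)) ≤ E0 := by
    rw [hE0]
    apply setIntegral_mono_set (exp_neg_integrableOn_Ioi 0 (by norm_num))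
      (Filter.Eventually.of_forall fun t => (Real.exp_pos _).le)
      (Filter.Eventually.of_forall (Set.Ioi_subset_Ioi hd0.le))
  have hub2 : ∫ t in Set.Ioi d, g t ≤ K2/al * d ^ (-al) + K3 * E0 := by
    have h := setIntegral_mono_on hgint2 hh2int measurableSet_Ioi hgle2
    rw [hval2] at h
    have : K2 * (d ^ (-al) / al) = K2/al * d^(-al) := by ring
    nlinarith [hK3pos.le, hEd]
  -- combine upper bound
  have hd_al : 1 ≤ π ^ al * d ^ (-al) := by
    have h1 : π ^ (-al) ≤ d ^ (-al) := Real.rpow_le_rpow_of_nonpos hd0 hdπ (by linarith)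
    have h2 : π ^ al * π ^ (-al) = 1 := by
      rw [← Real.rpow_add Real.pi_pos, add_neg_cancel, Real.rpow_zero]
    nlinarith [Real.rpow_pos_of_pos Real.pi_pos al]
  have hupper : ∫ t in Set.Ioi (0:ℝ), g t ≤ C₀ * d ^ (-al) := by
    rw [hsplit]
    have hKE : K3 * E0 ≤ K3 * E0 * π ^ al * d ^ (-al) := by
      nlinarith [mul_nonneg hK3pos.le hE0nn]
    have hdal_pos : 0 < d ^ (-al) := Real.rpow_pos_of_pos hd0 _
    rw [hC₀]
    nlinarith
  -- lower bound
  set m : ℝ := Real.exp (-(π * ((n:ℝ)-2))) * ((2 * Real.exp (-(4*π)) * d) /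
      (omegaSphere n * (5^ν * d^(n:ℝ)))) * (2*d) ^ (-1 - 2*s) with hm
  have hmnn : 0 ≤ m := by rw [hm]; positivity
  have hglow : ∀ t ∈ Set.Ioc d (2*d), m ≤ g t := fun t ht =>
    piece3 n hn s hs0 hs1 τ d hτ1 hd0 hdπ h1τ t ht.1 ht.2
  have hsub : Set.Ioc d (2*d) ⊆ Set.Ioi (0:ℝ) := fun t ht => lt_trans hd0 ht.1
  have hlow1 : (∫ t in Set.Ioc d (2*d), g t) ≤ ∫ t in Set.Ioi (0:ℝ), g t :=
    setIntegral_mono_set hgint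
      ((ae_restrict_iff' measurableSet_Ioi).2 (Filter.Eventually.of_forall hgnn))
      (Filter.Eventually.of_forall hsub)
  have hlow2 : m * d ≤ ∫ t in Set.Ioc d (2*d), g t := by
    have hconst : (∫ _ in Set.Ioc d (2*d), m) = m * d := by
      rw [setIntegral_const, Real.volume_real_Ioc_of_le (by linarith), smul_eq_mul,
        show 2*d - d = d by ring]
      ring
    rw [← hconst]
    exact setIntegral_mono_on (integrableOn_const (by
        rw [Real.volume_Ioc]; exact ENNReal.ofReal_ne_top))
      (hgint.mono_set hsub)
      measurableSet_Ioc hglow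
  have hlower : c₀ * d ^ (-al) ≤ ∫ t in Set.Ioi (0:ℝ), g t := by
    have heq : m * d = c₀ * d ^ (-al) := by
      have key : d * d ^ (-1-2*s) * d * (d ^ (n:ℝ))⁻¹ = d ^ (-al) := by
        rw [← Real.rpow_neg hd0.le (n:ℝ)]
        rw [show d * d ^ (-1-2*s) * d * d^(-(n:ℝ))
            = d ^ (1:ℝ) * d ^ (-1-2*s) * (d ^ (1:ℝ) * d^(-(n:ℝ))) by rw [Real.rpow_one]; ring]
        rw [← Real.rpow_add hd0, ← Real.rpow_add hd0, ← Real.rpow_add hd0]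
        congr 1
        rw [hal]; ring
      have hP1 : (2*d:ℝ) ^ (-1 - 2*s) = 2^(-1 - 2*s) * d^(-1 - 2*s) :=
        Real.mul_rpow (by norm_num) hd0.le
      have h5ν : ((5:ℝ)^ν) ≠ 0 := (Real.rpow_pos_of_pos (by norm_num) _).ne'
      have hων : omegaSphere n ≠ 0 := hω.ne'
      have hdn : d^(n:ℝ) ≠ 0 := (Real.rpow_pos_of_pos hd0 _).ne'
      rw [hm, hc₀, hP1, ← key]
      field_simp
    rw [← heq]
    exact le_trans hlow2 hlow1
  exact ⟨hlower, hupper⟩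

end Aux

theorem stmt13 (n : ℕ) (hn : 3 ≤ n) (s : ℝ) (hs0 : 0 < 2 * s) (hs1 : 2 * s < 1) :
    ∃ c C : ℝ, 0 < c ∧ c ≤ C ∧ ∀ x y : EuclideanSpace ℝ (Fin n),
      x ∈ Metric.sphere (0 : EuclideanSpace ℝ (Fin n)) 1 →
      y ∈ Metric.sphere (0 : EuclideanSpace ℝ (Fin n)) 1 → x ≠ y →
      (c / Real.arccos (inner ℝ x y : ℝ) ^ (((n : ℝ) - 1) + 2 * s) ≤
          (1 / |Real.Gamma (-(2 * s))|) *
            ∫ t in Set.Ioi (0 : ℝ),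
              Real.exp (-(t * ((n : ℝ) - 2) / 2)) *
                spherePoissonKernel n (Real.exp (-t)) (inner ℝ x y : ℝ) * t ^ (-1 - 2 * s)) ∧
      (1 / |Real.Gamma (-(2 * s))|) *
          (∫ t in Set.Ioi (0 : ℝ),
            Real.exp (-(t * ((n : ℝ) - 2) / 2)) *
              spherePoissonKernel n (Real.exp (-t)) (inner ℝ x y : ℝ) * t ^ (-1 - 2 * s)) ≤
        C / Real.arccos (inner ℝ x y : ℝ) ^ (((n : ℝ) - 1) + 2 * s) := by
  obtain ⟨c₀, C₀, hc₀, hC₀, hcore⟩ := core n hn s hs0 hs1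
  have hΓ : 0 < |Real.Gamma (-(2 * s))| := by
    rw [abs_pos]
    apply Real.Gamma_ne_zero
    intro m
    cases m with
    | zero => simpa using (by linarith : -(2*s) ≠ 0)
    | succ k =>
      push_cast
      intro h
      have : (k:ℝ) ≥ 0 := Nat.cast_nonneg k
      linarith
  set A : ℝ := 1 / |Real.Gamma (-(2 * s))| with hA
  have hApos : 0 < A := by positivity
  refine ⟨A * c₀, A * max c₀ C₀, by positivity,
    mul_le_mul_of_nonneg_left (le_max_left _ _) hApos.le, fun x y hx hy hxy => ?_⟩
  set τ : ℝ := (inner ℝ x y : ℝ) with hτ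
  have hnx : ‖x‖ = 1 := by rwa [mem_sphere_zero_iff_norm] at hx
  have hny : ‖y‖ = 1 := by rwa [mem_sphere_zero_iff_norm] at hy
  have hτm : -1 ≤ τ := by
    have := abs_real_inner_le_norm x y
    rw [hnx, hny] at this
    rw [hτ]
    cases abs_le.1 this with
    | intro h1 h2 => linarith
  have hτ1 : τ < 1 := by
    have hle : τ ≤ 1 := by
      have := abs_real_inner_le_norm x y
      rw [hnx, hny] at this
      cases abs_le.1 this with
      | intro h1 h2 => simpa [hτ] using h2
    rcases lt_or_eq_of_le hle with h | h
    · exact h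
    · exact absurd ((inner_eq_one_iff_of_norm_eq_one hnx hny).1 h) hxy
  obtain ⟨hlow, hup⟩ := hcore τ hτm hτ1
  have hd0 : 0 < Real.arccos τ := Real.arccos_pos.2 hτ1
  have hpow : Real.arccos τ ^ (-((n : ℝ) - 1 + 2 * s))
      = (Real.arccos τ ^ (((n : ℝ) - 1) + 2 * s))⁻¹ := by
    rw [← Real.rpow_neg hd0.le]
  constructor
  · rw [div_eq_mul_inv, ← hpow]
    calc A * c₀ * Real.arccos τ ^ (-((n:ℝ) - 1 + 2*s))
        = A * (c₀ * Real.arccos τ ^ (-((n:ℝ) - 1 + 2*s))) := by ring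
      _ ≤ A * _ := mul_le_mul_of_nonneg_left hlow hApos.le
  · rw [div_eq_mul_inv, ← hpow]
    calc A * _ ≤ A * (C₀ * Real.arccos τ ^ (-((n:ℝ) - 1 + 2*s))) :=
          mul_le_mul_of_nonneg_left hup hApos.le
      _ = A * C₀ * Real.arccos τ ^ (-((n:ℝ) - 1 + 2*s)) := by ring
      _ ≤ A * max c₀ C₀ * Real.arccos τ ^ (-((n:ℝ) - 1 + 2*s)) := by
          have hp := Real.rpow_pos_of_pos hd0 (-((n:ℝ) - 1 + 2*s))
          exact mul_le_mul_of_nonneg_right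
            (mul_le_mul_of_nonneg_left (le_max_right _ _) hApos.le) hp.le
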